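/- Let ε ∈ (0,1). For every δ > 0 there exists a constant C = C(ε,δ) > 0 such that for all x ∈ D and all r > 0: ∫ over {z ∈ D : |x−z| ≥ r} of δ_D(z)^{−ε}·|x−z|^{−d−δ} dz ≤ C·(δ_D(x) ∨ r)^{−ε}·r^{−δ}. -/

import Mathlib

open Set Metric MeasureTheory Real Filter Topology

noncomputable section

/-- `f` satisfies the lower scaling condition at zero with index `b`. -/
def HasLowerScaling (f : ℝ → ℝ) (b : ℝ) : Prop :=
  ∃ C : ℝ, 1 ≤ C ∧ ∀ s r : ℝ, 0 < s → s ≤ r → r ≤ 1 → C⁻¹ * (r / s) ^ b ≤ f r / f s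

/-- `f` satisfies the upper scaling condition at zero with index `b`. -/
def HasUpperScaling (f : ℝ → ℝ) (b : ℝ) : Prop :=
  ∃ C : ℝ, 1 ≤ C ∧ ∀ s r : ℝ, 0 < s → s ≤ r → r ≤ 1 → f r / f s ≤ C * (r / s) ^ b

/-- The lower Matuszewska index of `f` at zero equals `β`,
i.e. `β` is the supremum of the indices for which the lower scaling condition holds. -/
def LowerIndexIs (f : ℝ → ℝ) (β : ℝ) : Prop :=
  (∀ b : ℝ, b < β → HasLowerScaling f b) ∧ (∀ b : ℝ, β < b → ¬ HasLowerScaling f b)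

/-- The upper Matuszewska index of `f` at zero equals `β`,
i.e. `β` is the infimum of the indices for which the upper scaling condition holds. -/
def UpperIndexIs (f : ℝ → ℝ) (β : ℝ) : Prop :=
  (∀ b : ℝ, β < b → HasUpperScaling f b) ∧ (∀ b : ℝ, b < β → ¬ HasUpperScaling f b)

/-- `f` is almost increasing on `(0,1]`. -/
def AlmostIncreasingOn01 (f : ℝ → ℝ) : Prop :=
  ∃ C : ℝ, 1 ≤ C ∧ ∀ s r : ℝ, 0 < s → s ≤ r → r ≤ 1 → f s ≤ C * f r

/-- `f` is almost decreasing on `(0,1]`. -/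
def AlmostDecreasingOn01 (f : ℝ → ℝ) : Prop :=
  ∃ C : ℝ, 1 ≤ C ∧ ∀ s r : ℝ, 0 < s → s ≤ r → r ≤ 1 → f r ≤ C * f s

/-- A positive Borel function on `(0,∞)`, equal to `1` on `[1,∞)`. -/
def StdFun (f : ℝ → ℝ) : Prop :=
  Measurable f ∧ (∀ r : ℝ, 0 < r → 0 < f r) ∧ (∀ r : ℝ, 1 ≤ r → f r = 1)

/-- The scaling condition for the slowly varying factor `ℓ`, with parameters `β₁, β₂`. -/
def EllScaling (l : ℝ → ℝ) (β₁ β₂ : ℝ) : Prop :=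
  ∀ ε : ℝ, 0 < ε → ∃ C : ℝ, 1 ≤ C ∧ ∀ s r : ℝ, 0 < s → s ≤ r → r ≤ 1 →
    C⁻¹ * (r / s) ^ (-(min ε β₁)) ≤ l r / l s ∧ l r / l s ≤ C * (r / s) ^ (min ε β₂)

/-- `l` has both Matuszewska indices at zero equal to `0`. -/
def SlowlyVaryingScaling (l : ℝ → ℝ) : Prop :=
  ∀ ε : ℝ, 0 < ε → ∃ C : ℝ, 1 ≤ C ∧ ∀ s r : ℝ, 0 < s → s ≤ r → r ≤ 1 →
    C⁻¹ * (r / s) ^ (-ε) ≤ l r / l s ∧ l r / l s ≤ C * (r / s) ^ ε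

/-- The distance to the boundary of `D`. -/
def dd {d : ℕ} (D : Set (EuclideanSpace ℝ (Fin d))) (x : EuclideanSpace ℝ (Fin d)) : ℝ :=
  Metric.infDist x (frontier D)

/-- The function `A_{f,g,h}(t,x,y)`. -/
def Afun {d : ℕ} (α : ℝ) (D : Set (EuclideanSpace ℝ (Fin d))) (f g h : ℝ → ℝ)
    (t : ℝ) (x y : EuclideanSpace ℝ (Fin d)) : ℝ :=
  f (max (min (dd D x) (dd D y)) (t ^ (1 / α)) / dist x y) *
  g (max (max (dd D x) (dd D y)) (t ^ (1 / α)) / dist x y) *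
  h (max (min (dd D x) (dd D y)) (t ^ (1 / α)) /
      min (max (max (dd D x) (dd D y)) (t ^ (1 / α))) (dist x y))

/-- The inward unit vector `𝐧ₓ = (x - Qₓ)/δ_D(x)`. -/
def nv {d : ℕ} (D : Set (EuclideanSpace ℝ (Fin d)))
    (Q : EuclideanSpace ℝ (Fin d) → EuclideanSpace ℝ (Fin d))
    (x : EuclideanSpace ℝ (Fin d)) : EuclideanSpace ℝ (Fin d) :=
  (dd D x)⁻¹ • (x - Q x)

/-- `∫_a^b A_{f,g,h}(t,x,x+u𝐧ₓ) A_{f,g,h}(t,x+u𝐧ₓ,y) u^{-α-1} du`. -/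
def Iint {d : ℕ} (α : ℝ) (D : Set (EuclideanSpace ℝ (Fin d)))
    (Q : EuclideanSpace ℝ (Fin d) → EuclideanSpace ℝ (Fin d))
    (f g h : ℝ → ℝ) (a b t : ℝ) (x y : EuclideanSpace ℝ (Fin d)) : ℝ :=
  ∫ u in Set.Ioo a b,
    Afun α D f g h t x (x + u • nv D Q x) * Afun α D f g h t (x + u • nv D Q x) y *
      u ^ (-α - 1)

/-- `∫_a^b f₀(k₂/u) f₂(u/rr) l(k₁/u) u^{-α-1} du`. -/
def Jint (α : ℝ) (f₀ f₂ l : ℝ → ℝ) (a b rr k₁ k₂ : ℝ) : ℝ :=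
  ∫ u in Set.Ioo a b, f₀ (k₂ / u) * f₂ (u / rr) * l (k₁ / u) * u ^ (-α - 1)

open scoped ENNReal NNReal

lemma aux_dyadic {t : ℝ} (ht : 1 ≤ t) : ∃ n : ℕ, (2:ℝ)^n ≤ t ∧ t < 2^(n+1) := by
  classical
  obtain ⟨m, hm⟩ := pow_unbounded_of_one_lt t (one_lt_two (α := ℝ))
  have hP : ∃ n : ℕ, t < (2:ℝ)^(n+1) :=
    ⟨m, hm.trans_le (pow_le_pow_right₀ one_le_two (Nat.le_succ m))⟩
  refine ⟨Nat.find hP, ?_, Nat.find_spec hP⟩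
  rcases Nat.eq_zero_or_pos (Nat.find hP) with h | h
  · rw [h]; simpa using ht
  · have h2 := Nat.find_min hP (Nat.sub_lt h one_pos)
    push_neg at h2
    have h3 : Nat.find hP - 1 + 1 = Nat.find hP := by omega
    rwa [h3] at h2

lemma aux_pow_sub_pow {a b : ℝ} (hb : 0 ≤ b) (hba : b ≤ a) :
    ∀ n : ℕ, a ^ n - b ^ n ≤ n * a ^ (n - 1) * (a - b) := by
  have ha : 0 ≤ a := hb.trans hba
  intro n
  induction n with
  | zero => simp
  | succ m ih =>
    have key : a ^ (m+1) - b ^ (m+1) = a * (a ^ m - b ^ m) + b ^ m * (a - b) := by ring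
    have h1 : a * (a ^ m - b ^ m) ≤ a * (m * a ^ (m-1) * (a - b)) :=
      mul_le_mul_of_nonneg_left ih ha
    have h2 : b ^ m * (a - b) ≤ a ^ m * (a - b) :=
      mul_le_mul_of_nonneg_right (pow_le_pow_left₀ hb hba m) (by linarith)
    have h3 : a * (m * a ^ (m-1) * (a - b)) ≤ m * a ^ m * (a - b) := by
      rcases m with _ | k
      · simp
      · rw [Nat.succ_sub_one]
        push_cast
        exact le_of_eq (by rw [pow_succ]; ring)
    calc a ^ (m+1) - b ^ (m+1) = a * (a ^ m - b ^ m) + b ^ m * (a - b) := key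
      _ ≤ m * a ^ m * (a - b) + a ^ m * (a - b) := by linarith
      _ = (m+1 : ℕ) * a ^ ((m+1) - 1) * (a - b) := by push_cast; ring

lemma aux_fubini {d : ℕ} (G : EuclideanSpace ℝ (Fin d) → ℝ≥0∞) (hG : Measurable G)
    {S T : Set (EuclideanSpace ℝ (Fin d))} (hS : MeasurableSet S) (hT : MeasurableSet T)
    (w : ℝ) (B : ℝ≥0∞)
    (h : ∀ y, (S ∩ Metric.closedBall y w).Nonempty →
      y ∈ T ∧ ∫⁻ z in S ∩ Metric.closedBall y w, G z ≤ B) :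
    (∫⁻ z in S, G z) * volume (Metric.closedBall (0 : EuclideanSpace ℝ (Fin d)) w)
      ≤ B * volume T := by
  classical
  have hWm : MeasurableSet {q : EuclideanSpace ℝ (Fin d) × EuclideanSpace ℝ (Fin d) |
      dist q.2 q.1 ≤ w} :=
    (isClosed_le (continuous_dist.comp (continuous_snd.prodMk continuous_fst))
      continuous_const).measurableSet
  set W : Set (EuclideanSpace ℝ (Fin d) × EuclideanSpace ℝ (Fin d)) :=
    {q | dist q.2 q.1 ≤ w} with hW
  have hH : Measurable fun q : EuclideanSpace ℝ (Fin d) × EuclideanSpace ℝ (Fin d) =>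
      S.indicator G q.1 * W.indicator (fun _ => (1:ℝ≥0∞)) q :=
    ((hG.indicator hS).comp measurable_fst).mul (measurable_const.indicator hWm)
  have step1 : (∫⁻ z in S, G z) * volume (Metric.closedBall (0 : EuclideanSpace ℝ (Fin d)) w)
      = ∫⁻ z, S.indicator G z * volume (Metric.closedBall z w) := by
    rw [← lintegral_indicator hS,
      ← lintegral_mul_const' _ _ (measure_closedBall_lt_top).ne]
    congr 1; ext z
    conv_rhs => rw [Measure.addHaar_closedBall_center volume z]
  have step2 : ∀ z, S.indicator G z * volume (Metric.closedBall z w)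
      = ∫⁻ y, S.indicator G z * W.indicator (fun _ => (1:ℝ≥0∞)) (z, y) := by
    intro z
    have : ∀ y : EuclideanSpace ℝ (Fin d), W.indicator (fun _ => (1:ℝ≥0∞)) (z, y)
        = (Metric.closedBall z w).indicator (fun _ => (1:ℝ≥0∞)) y := by
      intro y
      simp only [hW, Set.indicator, Set.mem_setOf_eq, Metric.mem_closedBall]
    simp_rw [this]
    rw [lintegral_const_mul _ (measurable_const.indicator measurableSet_closedBall),
      lintegral_indicator_const measurableSet_closedBall, one_mul]
  have swap : ∫⁻ z, ∫⁻ y, S.indicator G z * W.indicator (fun _ => (1:ℝ≥0∞)) (z, y)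
      = ∫⁻ y, ∫⁻ z, S.indicator G z * W.indicator (fun _ => (1:ℝ≥0∞)) (z, y) :=
    lintegral_lintegral_swap hH.aemeasurable
  have step3 : ∀ y, (∫⁻ z, S.indicator G z * W.indicator (fun _ => (1:ℝ≥0∞)) (z, y))
      = ∫⁻ z in S ∩ Metric.closedBall y w, G z := by
    intro y
    have : ∀ z, S.indicator G z * W.indicator (fun _ => (1:ℝ≥0∞)) (z, y)
        = (S ∩ Metric.closedBall y w).indicator G z := by
      intro z
      by_cases hz : z ∈ S
      · by_cases hz2 : dist z y ≤ w
        · have hw1 : (z, y) ∈ W := by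
            simp only [hW, Set.mem_setOf_eq]; rwa [dist_comm]
          have hw2 : z ∈ S ∩ Metric.closedBall y w := ⟨hz, Metric.mem_closedBall.2 hz2⟩
          rw [Set.indicator_of_mem hz, Set.indicator_of_mem hw1,
            Set.indicator_of_mem hw2, mul_one]
        · have hw1 : (z, y) ∉ W := by
            simp only [hW, Set.mem_setOf_eq]; rwa [dist_comm]
          have hw2 : z ∉ S ∩ Metric.closedBall y w :=
            fun hc => hz2 (Metric.mem_closedBall.1 hc.2)
          rw [Set.indicator_of_notMem hw1, Set.indicator_of_notMem hw2, mul_zero]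
      · have hw2 : z ∉ S ∩ Metric.closedBall y w := fun hc => hz hc.1
        rw [Set.indicator_of_notMem hz, Set.indicator_of_notMem hw2, zero_mul]
    simp_rw [this]
    rw [lintegral_indicator (hS.inter measurableSet_closedBall)]
  calc (∫⁻ z in S, G z) * volume (Metric.closedBall (0 : EuclideanSpace ℝ (Fin d)) w)
      = ∫⁻ y, ∫⁻ z in S ∩ Metric.closedBall y w, G z := by
        rw [step1]; simp_rw [step2]; rw [swap]; simp_rw [step3]
    _ ≤ ∫⁻ y, T.indicator (fun _ => B) y := by
        apply lintegral_mono
        intro y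
        show (∫⁻ z in S ∩ Metric.closedBall y w, G z) ≤ T.indicator (fun _ => B) y
        by_cases hne : (S ∩ Metric.closedBall y w).Nonempty
        · obtain ⟨hyT, hle⟩ := h y hne
          rw [Set.indicator_of_mem hyT]; exact hle
        · rw [Set.not_nonempty_iff_eq_empty] at hne
          have h0 : (∫⁻ z in S ∩ Metric.closedBall y w, G z) = 0 := by
            rw [hne]; simp
          exact le_trans (le_of_eq h0) bot_le
    _ = B * volume T := by rw [lintegral_indicator_const hT]

set_option maxHeartbeats 1600000 in
lemma aux_shell
    (d : ℕ) (hd : 2 ≤ d)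
    (D : Set (EuclideanSpace ℝ (Fin d))) (hDopen : IsOpen D)
    (ε : ℝ) (hε0 : 0 < ε) (hε1 : ε < 1)
    (C₀ : ℝ) (hC₀ : 0 < C₀)
    (hball : ∀ x ∈ D, ∀ ρ : ℝ, 0 < ρ →
      (∫ z in D ∩ Metric.ball x ρ, dd D z ^ (-ε))
        ≤ C₀ * max (dd D x) ρ ^ (-ε) * ρ ^ (d : ℝ)) :
    ∃ K : ℝ, 0 < K ∧ ∀ x ∈ D, ∀ r : ℝ, 0 < r →
      IntegrableOn (fun z => dd D z ^ (-ε)) {z | z ∈ D ∧ r ≤ dist x z} →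
      ∀ s : ℝ, r ≤ s →
      (∫⁻ z in D ∩ {z | s ≤ dist x z ∧ dist x z < 2*s},
          ENNReal.ofReal (dd D z ^ (-ε)))
        ≤ ENNReal.ofReal (K * max (dd D x) s ^ (-ε) * s ^ (d:ℝ)) := by
  classical
  haveI : Nontrivial (EuclideanSpace ℝ (Fin d)) := by
    have : 0 < Module.finrank ℝ (EuclideanSpace ℝ (Fin d)) := by
      rw [finrank_euclideanSpace_fin]; omega
    exact Module.nontrivial_of_finrank_pos this
  set Vb : ℝ≥0∞ := volume (Metric.ball (0 : EuclideanSpace ℝ (Fin d)) 1) with hVb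
  have hVb0 : Vb ≠ 0 := (measure_ball_pos volume 0 one_pos).ne'
  have hVbtop : Vb ≠ ⊤ := measure_ball_lt_top.ne
  set Vr : ℝ := Vb.toReal with hVr
  have hVr0 : 0 ≤ Vr := ENNReal.toReal_nonneg
  have hVbeq : Vb = ENNReal.ofReal Vr := (ENNReal.ofReal_toReal hVbtop).symm
  have ha1 : (2:ℝ) ^ (ε - 1) < 1 :=
    Real.rpow_lt_one_of_one_lt_of_neg one_lt_two (by linarith)
  have ha0 : (0:ℝ) < 2 ^ (ε - 1) := Real.rpow_pos_of_pos two_pos _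
  set θ : ℝ := (1 - 2 ^ (ε - 1))⁻¹ with hθ
  have hθ0 : 0 < θ := inv_pos.2 (by linarith)
  set Kgeo : ℝ := 4 * C₀ * d * 3^d * 8^d with hKgeo
  have hKgeo0 : 0 < Kgeo := by positivity
  set K : ℝ := 2^(d+1) * Vr + 16 * Kgeo * θ with hK
  have hK0 : 0 < K := by positivity
  refine ⟨K, hK0, ?_⟩
  intro x hx r hr hInt s hs
  have hs0 : 0 < s := lt_of_lt_of_le hr hs
  set δx : ℝ := dd D x with hδx
  have hδx0 : 0 ≤ δx := Metric.infDist_nonneg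
  set G : EuclideanSpace ℝ (Fin d) → ℝ≥0∞ := fun z => ENNReal.ofReal (dd D z ^ (-ε)) with hG
  have hddm : Measurable fun z : EuclideanSpace ℝ (Fin d) => dd D z :=
    (Metric.continuous_infDist_pt (frontier D)).measurable
  have hgm : Measurable fun z : EuclideanSpace ℝ (Fin d) => dd D z ^ (-ε) := hddm.pow measurable_const
  have hGm : Measurable G := hgm.ennreal_ofReal
  have hmax0 : 0 < max δx s := lt_of_lt_of_le hs0 (le_max_right _ _)
  have hmaxε : 0 ≤ max δx s ^ (-ε) := Real.rpow_nonneg hmax0.le _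
  have hsd : 0 ≤ s ^ (d:ℝ) := Real.rpow_nonneg hs0.le _
  by_cases hcase : 4 * s ≤ δx
  · -- interior case
    have hmaxeq : max δx s = δx := max_eq_left (by linarith)
    have hptwise : ∀ z ∈ D ∩ {z : EuclideanSpace ℝ (Fin d) | s ≤ dist x z ∧ dist x z < 2*s},
        G z ≤ ENNReal.ofReal (2 * δx ^ (-ε)) := by
      rintro z ⟨hzD, hz1, hz2⟩
      have hlip : δx ≤ dd D z + dist x z := Metric.infDist_le_infDist_add_dist
      have hdz : δx / 2 ≤ dd D z := by linarith
      have hdz0 : 0 < δx / 2 := by linarith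
      apply ENNReal.ofReal_le_ofReal
      calc dd D z ^ (-ε) ≤ (δx / 2) ^ (-ε) :=
            Real.rpow_le_rpow_of_nonpos hdz0 hdz (by linarith)
        _ = δx ^ (-ε) * 2 ^ ε := by
            rw [Real.div_rpow hδx0 two_pos.le, Real.rpow_neg two_pos.le,
              division_def, inv_inv]
        _ ≤ 2 * δx ^ (-ε) := by
            have h2e : (2:ℝ) ^ ε ≤ 2 := by
              calc (2:ℝ) ^ ε ≤ 2 ^ (1:ℝ) :=
                    Real.rpow_le_rpow_of_exponent_le one_le_two hε1.le
                _ = 2 := Real.rpow_one 2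
            have hn : 0 ≤ δx ^ (-ε) := Real.rpow_nonneg hδx0 _
            linarith [mul_le_mul_of_nonneg_left h2e hn]
    calc (∫⁻ z in D ∩ {z : EuclideanSpace ℝ (Fin d) | s ≤ dist x z ∧ dist x z < 2*s}, G z)
        ≤ ∫⁻ _ in D ∩ {z : EuclideanSpace ℝ (Fin d) | s ≤ dist x z ∧ dist x z < 2*s},
            ENNReal.ofReal (2 * δx ^ (-ε)) := setLIntegral_mono measurable_const hptwise
      _ = ENNReal.ofReal (2 * δx ^ (-ε)) *
            volume (D ∩ {z : EuclideanSpace ℝ (Fin d) | s ≤ dist x z ∧ dist x z < 2*s}) := setLIntegral_const _ _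
      _ ≤ ENNReal.ofReal (2 * δx ^ (-ε)) * volume (Metric.ball x (2*s)) := by
          apply mul_le_mul_right
          apply measure_mono
          rintro z ⟨_, _, hz2⟩
          exact Metric.mem_ball.2 (by rwa [dist_comm])
      _ = ENNReal.ofReal (2 * δx ^ (-ε)) * ENNReal.ofReal ((2*s)^d * Vr) := by
          rw [Measure.addHaar_ball_of_pos volume x (by linarith : (0:ℝ) < 2*s),
            finrank_euclideanSpace_fin, ← hVb, hVbeq,
            ← ENNReal.ofReal_mul (by positivity)]
      _ ≤ ENNReal.ofReal (K * max δx s ^ (-ε) * s ^ (d:ℝ)) := by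
          rw [← ENNReal.ofReal_mul (by positivity)]
          apply ENNReal.ofReal_le_ofReal
          rw [hmaxeq]
          have hsdd : (s:ℝ) ^ (d:ℝ) = s ^ d := Real.rpow_natCast s d
          have hδε : 0 ≤ δx ^ (-ε) := Real.rpow_nonneg hδx0 _
          have hKle : 2^(d+1) * Vr ≤ K := by
            rw [hK]; linarith [mul_nonneg (mul_nonneg (by norm_num : (0:ℝ) ≤ 16) hKgeo0.le) hθ0.le]
          calc 2 * δx ^ (-ε) * ((2*s)^d * Vr) = (2^(d+1) * Vr) * (δx ^ (-ε) * s^d) := by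
                rw [mul_pow]; ring
            _ ≤ K * (δx ^ (-ε) * s^d) := by
                apply mul_le_mul_of_nonneg_right hKle (by positivity)
            _ = K * δx ^ (-ε) * s ^ (d:ℝ) := by rw [hsdd]; ring
  · -- boundary case : δx < 4 * s
    push_neg at hcase
    set A : ℝ := (d:ℝ) - ε with hA
    have hd2 : (2:ℝ) ≤ (d:ℝ) := by exact_mod_cast hd
    have hA0 : 0 ≤ A := by rw [hA]; linarith
    set q : ℝ := (2:ℝ)⁻¹ with hq
    have hq0 : (0:ℝ) < q := by norm_num [hq]
    have hq1 : q < 1 := by norm_num [hq]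
    set SS : ℕ → Set (EuclideanSpace ℝ (Fin d)) := fun k =>
      D ∩ {z | s*(1+q^(k+1)) < dist x z ∧ dist x z ≤ s*(1+q^k)} with hSS
    set U : ℕ → Set (EuclideanSpace ℝ (Fin d)) := fun n =>
      Nat.casesOn n (Metric.sphere x s) SS with hU
    have cover : D ∩ {z : EuclideanSpace ℝ (Fin d) | s ≤ dist x z ∧ dist x z < 2*s}
        ⊆ ⋃ n, U n := by
      rintro z ⟨hzD, hz1, hz2⟩
      rcases eq_or_lt_of_le hz1 with heq | hlt
      · refine Set.mem_iUnion.2 ⟨0, ?_⟩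
        show z ∈ Metric.sphere x s
        rw [Metric.mem_sphere, dist_comm]
        exact heq.symm
      · set u : ℝ := (dist x z - s)/s with hu
        have hu0 : 0 < u := div_pos (by linarith) hs0
        have hu1 : u < 1 := by
          rw [hu, div_lt_one hs0]; linarith
        have h1u : 1 ≤ 1/u := by
          rw [le_div_iff₀ hu0, one_mul]; exact hu1.le
        obtain ⟨k, hk1, hk2⟩ := aux_dyadic h1u
        have hzu : dist x z = s*(1+u) := by
          rw [hu]; field_simp; ring
        have hqk : q^k = ((2:ℝ)^k)⁻¹ := by rw [hq, inv_pow]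
        have hqk1 : q^(k+1) = ((2:ℝ)^(k+1))⁻¹ := by rw [hq, inv_pow]
        have e1 : u ≤ q^k := by
          rw [hqk]
          rw [one_div] at hk1
          calc u = (u⁻¹)⁻¹ := (inv_inv u).symm
            _ ≤ ((2:ℝ)^k)⁻¹ := by
                apply inv_anti₀ (pow_pos two_pos k) hk1
        have e2 : q^(k+1) < u := by
          rw [hqk1]
          rw [one_div] at hk2
          calc ((2:ℝ)^(k+1))⁻¹ < (u⁻¹)⁻¹ := by
                apply inv_strictAnti₀ (inv_pos.2 hu0) hk2
            _ = u := inv_inv u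
        refine Set.mem_iUnion.2 ⟨k+1, ?_⟩
        show z ∈ SS k
        refine ⟨hzD, ?_, ?_⟩
        · rw [hzu]
          linarith [mul_lt_mul_of_pos_left e2 hs0]
        · rw [hzu]
          linarith [mul_le_mul_of_nonneg_left e1 hs0.le]
    have hbound : ∀ n, (∫⁻ z in U n, G z) ≤
        ENNReal.ofReal (Kgeo * s ^ A) * (ENNReal.ofReal ((2:ℝ)^(ε-1)))^n := by
      intro n
      match n with
      | 0 =>
        have h0 : (∫⁻ z in Metric.sphere x s, G z) = 0 :=
          setLIntegral_measure_zero _ _ (Measure.addHaar_sphere volume x s)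
        exact le_trans (le_of_eq h0) bot_le
      | Nat.succ k =>
        set t : ℝ := q^k with ht
        have ht0 : 0 < t := pow_pos hq0 k
        have ht1 : t ≤ 1 := pow_le_one₀ hq0.le hq1.le
        have hqk1 : q^(k+1) = t/2 := by rw [pow_succ, ht, hq]; ring
        set w : ℝ := s*t/8 with hw
        have hw0 : 0 < w := by rw [hw]; positivity
        set ρ : ℝ := s*t/2 with hρ
        have hρ0 : 0 < ρ := by rw [hρ]; positivity
        set R1 : ℝ := s*(1+2*t) with hR1
        set R0 : ℝ := s*(1+t/4) with hR0
        have hR10 : 0 < R1 := by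
          rw [hR1]; exact mul_pos hs0 (by linarith)
        have hR00 : 0 < R0 := by
          rw [hR0]; exact mul_pos hs0 (by linarith)
        have hR01 : R0 ≤ R1 := by
          rw [hR0, hR1]
          exact mul_le_mul_of_nonneg_left (by linarith) hs0.le
        set T : Set (EuclideanSpace ℝ (Fin d)) :=
          Metric.closedBall x R1 \ Metric.ball x R0 with hT
        set B : ℝ≥0∞ := ENNReal.ofReal (C₀ * ρ ^ A) with hB
        have hSSm : MeasurableSet (SS k) := by
          apply hDopen.measurableSet.inter
          have hdm : Measurable fun z : EuclideanSpace ℝ (Fin d) => dist x z :=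
            (Continuous.dist continuous_const continuous_id).measurable
          exact (measurableSet_lt measurable_const hdm).inter
            (measurableSet_le hdm measurable_const)
        have hTm : MeasurableSet T := measurableSet_closedBall.diff measurableSet_ball
        have hyp : ∀ y, (SS k ∩ Metric.closedBall y w).Nonempty →
            y ∈ T ∧ (∫⁻ z in SS k ∩ Metric.closedBall y w, G z) ≤ B := by
          rintro y ⟨z₀, ⟨hz₀D, hz₀1, hz₀2⟩, hz₀y⟩
          rw [Metric.mem_closedBall] at hz₀y
          rw [hqk1] at hz₀1
          rw [← ht] at hz₀2
          constructor
          · constructor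
            · rw [Metric.mem_closedBall, hR1]
              have htri : dist y x ≤ dist y z₀ + dist z₀ x := dist_triangle y z₀ x
              rw [dist_comm y z₀] at htri
              rw [dist_comm z₀ x] at htri
              linarith [hw, hz₀y, htri, hz₀2, mul_pos hs0 ht0]
            · intro hyball
              rw [Metric.mem_ball, hR0] at hyball
              have htri : dist x z₀ ≤ dist x y + dist y z₀ := dist_triangle x y z₀
              rw [dist_comm x y] at htri
              rw [dist_comm y z₀] at htri
              linarith [hw, hz₀y, htri, hz₀1, hyball, mul_pos hs0 ht0]
          · have hsub : SS k ∩ Metric.closedBall y w ⊆ D ∩ Metric.ball z₀ ρ := by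
              rintro z ⟨⟨hzD, hz1, hz2⟩, hzy⟩
              rw [Metric.mem_closedBall] at hzy
              refine ⟨hzD, ?_⟩
              rw [Metric.mem_ball, hρ]
              have htri : dist z z₀ ≤ dist z y + dist y z₀ := dist_triangle z y z₀
              rw [dist_comm y z₀] at htri
              linarith [hw, hzy, hz₀y, htri, mul_pos hs0 ht0]
            have hsub2 : D ∩ Metric.ball z₀ ρ ⊆ {z | z ∈ D ∧ r ≤ dist x z} := by
              rintro z ⟨hzD, hzb⟩
              rw [Metric.mem_ball, hρ] at hzb
              refine ⟨hzD, ?_⟩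
              have htri : dist x z₀ ≤ dist x z + dist z z₀ := dist_triangle x z z₀
              linarith [htri, hz₀1, hs, hzb, mul_pos hs0 ht0]
            have hint : IntegrableOn (fun z => dd D z ^ (-ε)) (D ∩ Metric.ball z₀ ρ) :=
              hInt.mono_set hsub2
            calc (∫⁻ z in SS k ∩ Metric.closedBall y w, G z)
                ≤ ∫⁻ z in D ∩ Metric.ball z₀ ρ, G z := lintegral_mono_set hsub
              _ = ENNReal.ofReal (∫ z in D ∩ Metric.ball z₀ ρ, dd D z ^ (-ε)) :=
                  (ofReal_integral_eq_lintegral_ofReal hint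
                    (ae_of_all _ fun z => Real.rpow_nonneg Metric.infDist_nonneg _)).symm
              _ ≤ ENNReal.ofReal (C₀ * max (dd D z₀) ρ ^ (-ε) * ρ ^ (d:ℝ)) :=
                  ENNReal.ofReal_le_ofReal (hball z₀ hz₀D ρ hρ0)
              _ ≤ B := by
                  rw [hB]
                  apply ENNReal.ofReal_le_ofReal
                  have hm1 : max (dd D z₀) ρ ^ (-ε) ≤ ρ ^ (-ε) :=
                    Real.rpow_le_rpow_of_nonpos hρ0 (le_max_right _ _)
                      (neg_nonpos.2 hε0.le)
                  have hm2 : ρ ^ (-ε) * ρ ^ ((d:ℝ)) = ρ ^ A := by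
                    rw [← Real.rpow_add hρ0]; congr 1; rw [hA]; ring
                  calc C₀ * max (dd D z₀) ρ ^ (-ε) * ρ ^ ((d:ℝ))
                      ≤ C₀ * ρ ^ (-ε) * ρ ^ ((d:ℝ)) := by
                        apply mul_le_mul_of_nonneg_right
                          (mul_le_mul_of_nonneg_left hm1 hC₀.le)
                          (Real.rpow_nonneg hρ0.le _)
                    _ = C₀ * ρ ^ A := by rw [mul_assoc, hm2]
        have hfub := aux_fubini G hGm hSSm hTm w B hyp
        have hv : volume (Metric.closedBall (0 : EuclideanSpace ℝ (Fin d)) w)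
            = ENNReal.ofReal (w^d) * Vb := by
          rw [Measure.addHaar_closedBall volume _ hw0.le, finrank_euclideanSpace_fin, ← hVb]
        have hvolT : volume T ≤ ENNReal.ofReal (↑d * (3*s)^(d-1) * (2*(s*t))) * Vb := by
          have hdiff : volume T = volume (Metric.closedBall x R1) - volume (Metric.ball x R0) := by
            rw [hT]
            exact measure_diff (Metric.ball_subset_closedBall.trans
              (Metric.closedBall_subset_closedBall hR01))
              measurableSet_ball.nullMeasurableSet measure_ball_lt_top.ne
          rw [hdiff, Measure.addHaar_closedBall volume _ hR10.le,
            Measure.addHaar_ball_of_pos volume _ hR00, finrank_euclideanSpace_fin, ← hVb,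
            ← ENNReal.sub_mul (fun _ _ => hVbtop),
            ← ENNReal.ofReal_sub _ (pow_nonneg hR00.le d)]
          apply mul_le_mul_left
          apply ENNReal.ofReal_le_ofReal
          have hps := aux_pow_sub_pow hR00.le hR01 d
          have hR13 : R1 ≤ 3*s := by
            rw [hR1]
            calc s*(1+2*t) ≤ s*3 := mul_le_mul_of_nonneg_left (by linarith) hs0.le
              _ = 3*s := by ring
          have h1 : R1^(d-1) ≤ (3*s)^(d-1) := pow_le_pow_left₀ hR10.le hR13 _
          have h2 : R1 - R0 ≤ 2*(s*t) := by
            rw [hR1, hR0]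
            linarith [mul_nonneg hs0.le ht0.le]
          have h3 : (0:ℝ) ≤ R1 - R0 := by linarith
          calc R1^d - R0^d ≤ ↑d * R1^(d-1) * (R1 - R0) := hps
            _ ≤ ↑d * (3*s)^(d-1) * (2*(s*t)) := by
                apply mul_le_mul
                · exact mul_le_mul_of_nonneg_left h1 (Nat.cast_nonneg d)
                · exact h2
                · exact h3
                · positivity
        have hkey : C₀ * ρ ^ A * (↑d * (3*s)^(d-1) * (2*(s*t))) ≤
            Kgeo * s ^ A * ((2:ℝ)^(ε-1))^(k+1) * w ^ d := by
          have hρA : ρ ^ A ≤ s ^ A * t ^ A := by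
            calc ρ ^ A ≤ (s*t) ^ A := by
                  apply Real.rpow_le_rpow hρ0.le _ hA0
                  rw [hρ]; linarith [mul_nonneg hs0.le ht0.le]
              _ = s ^ A * t ^ A := Real.mul_rpow hs0.le ht0.le
          have e2 : s^(d-1) * s = s^d := by
            rw [← pow_succ]; congr 1; omega
          have e3 : t ^ A * t = t ^ (A+1) := by
            nth_rewrite 2 [← Real.rpow_one t]
            rw [← Real.rpow_add ht0]
          have hL : C₀ * ρ ^ A * (↑d * (3*s)^(d-1) * (2*(s*t)))
              ≤ (2*C₀*↑d*3^(d-1)) * (s^A * s^d * t^(A+1)) := by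
            calc C₀ * ρ ^ A * (↑d * (3*s)^(d-1) * (2*(s*t)))
                ≤ C₀ * (s^A * t^A) * (↑d * (3*s)^(d-1) * (2*(s*t))) := by
                  apply mul_le_mul_of_nonneg_right
                    (mul_le_mul_of_nonneg_left hρA hC₀.le) (by positivity)
              _ = (2*C₀*↑d*3^(d-1)) * (s^A * (s^(d-1)*s) * (t^A*t)) := by
                  rw [mul_pow]; ring
              _ = (2*C₀*↑d*3^(d-1)) * (s^A * s^d * t^(A+1)) := by rw [e2, e3]
          have ht2 : t = (2:ℝ) ^ (-(k:ℝ)) := by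
            rw [ht, hq, inv_pow, ← Real.rpow_natCast 2 k, ← Real.rpow_neg two_pos.le]
          have f2 : ((2:ℝ)^(ε-1))^k = t ^ ((1:ℝ)-ε) := by
            rw [← Real.rpow_natCast ((2:ℝ)^(ε-1)) k, ← Real.rpow_mul two_pos.le,
              ht2, ← Real.rpow_mul two_pos.le]
            congr 1; ring
          have f3 : (8:ℝ)^d * w ^ d = s^d * t^d := by
            have h8st : (8:ℝ) * (s*t/8) = s*t := by ring
            rw [hw, ← mul_pow, h8st, mul_pow]
          have f4 : t^((1:ℝ)-ε) * (t:ℝ)^d = t^(A+1) := by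
            rw [← Real.rpow_natCast t d, ← Real.rpow_add ht0]
            congr 1; rw [hA]; ring
          have hR : (8:ℝ)^d * (Kgeo * s ^ A * ((2:ℝ)^(ε-1))^(k+1) * w ^ d)
              = (8:ℝ)^d * ((4*C₀*↑d*3^d*(2:ℝ)^(ε-1)) * (s^A * s^d * t^(A+1))) := by
            rw [pow_succ, f2]
            calc (8:ℝ)^d * (Kgeo * s ^ A * (t^((1:ℝ)-ε) * (2:ℝ)^(ε-1)) * w ^ d)
                = Kgeo * s ^ A * t^((1:ℝ)-ε) * (2:ℝ)^(ε-1) * ((8:ℝ)^d * w^d) := by ring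
              _ = Kgeo * s ^ A * t^((1:ℝ)-ε) * (2:ℝ)^(ε-1) * (s^d * t^d) := by rw [f3]
              _ = (Kgeo * (2:ℝ)^(ε-1)) * (s^A * s^d) * (t^((1:ℝ)-ε) * t^d) := by ring
              _ = (Kgeo * (2:ℝ)^(ε-1)) * (s^A * s^d) * t^(A+1) := by rw [f4]
              _ = (8:ℝ)^d * ((4*C₀*↑d*3^d*(2:ℝ)^(ε-1)) * (s^A * s^d * t^(A+1))) := by
                  rw [hKgeo]; ring
          have hcoeff : (2*C₀*↑d*3^(d-1)) ≤ (4*C₀*↑d*3^d*(2:ℝ)^(ε-1)) := by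
            have h3d : (3:ℝ)^d = 3 * 3^(d-1) := by
              rw [← pow_succ']; congr 1; omega
            have h2e : (2:ℝ)⁻¹ ≤ (2:ℝ)^(ε-1) := by
              have := Real.rpow_le_rpow_of_exponent_le one_le_two
                (by linarith : (-1:ℝ) ≤ ε - 1)
              rwa [Real.rpow_neg_one] at this
            have h3p : (0:ℝ) < 3^(d-1) := by positivity
            have hpos : (0:ℝ) ≤ C₀ * (d:ℝ) * 3^(d-1) :=
              le_of_lt (mul_pos (mul_pos hC₀ (by linarith : (0:ℝ) < (d:ℝ))) h3p)
            rw [h3d]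
            linarith [mul_le_mul_of_nonneg_left h2e hpos]
          have hmono : (0:ℝ) ≤ s^A * s^d * t^(A+1) := by positivity
          have h8 : (0:ℝ) < 8^d := by positivity
          have := mul_le_mul_of_nonneg_right hcoeff hmono
          calc C₀ * ρ ^ A * (↑d * (3*s)^(d-1) * (2*(s*t)))
              ≤ (2*C₀*↑d*3^(d-1)) * (s^A * s^d * t^(A+1)) := hL
            _ ≤ (4*C₀*↑d*3^d*(2:ℝ)^(ε-1)) * (s^A * s^d * t^(A+1)) := this
            _ = Kgeo * s ^ A * ((2:ℝ)^(ε-1))^(k+1) * w ^ d := by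
                have := mul_left_cancel₀ (ne_of_gt h8) hR.symm
                linarith [this]
        have hvne : volume (Metric.closedBall (0 : EuclideanSpace ℝ (Fin d)) w) ≠ 0 := by
          rw [hv]
          exact mul_ne_zero (by simp [ENNReal.ofReal_eq_zero]; positivity) hVb0
        have hvtop : volume (Metric.closedBall (0 : EuclideanSpace ℝ (Fin d)) w) ≠ ⊤ :=
          measure_closedBall_lt_top.ne
        have hgoal : B * volume T ≤
            (ENNReal.ofReal (Kgeo * s ^ A) * (ENNReal.ofReal ((2:ℝ)^(ε-1)))^(k+1)) *
              volume (Metric.closedBall (0 : EuclideanSpace ℝ (Fin d)) w) := by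
          calc B * volume T
              ≤ ENNReal.ofReal (C₀ * ρ^A) *
                  (ENNReal.ofReal (↑d * (3*s)^(d-1) * (2*(s*t))) * Vb) := by
                rw [hB]; exact mul_le_mul_right hvolT _
            _ = ENNReal.ofReal (C₀ * ρ^A * (↑d * (3*s)^(d-1) * (2*(s*t)))) * Vb := by
                rw [← mul_assoc, ← ENNReal.ofReal_mul (by positivity)]
            _ ≤ ENNReal.ofReal (Kgeo * s^A * ((2:ℝ)^(ε-1))^(k+1) * w^d) * Vb :=
                mul_le_mul_left (ENNReal.ofReal_le_ofReal hkey) _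
            _ = (ENNReal.ofReal (Kgeo * s ^ A) * (ENNReal.ofReal ((2:ℝ)^(ε-1)))^(k+1)) *
                  (ENNReal.ofReal (w^d) * Vb) := by
                rw [← ENNReal.ofReal_pow ha0.le, ← ENNReal.ofReal_mul (by positivity),
                  ← mul_assoc, ← ENNReal.ofReal_mul (by positivity)]
            _ = _ := by rw [← hv]
        have hUk : (∫⁻ z in U (k+1), G z) = ∫⁻ z in SS k, G z := rfl
        rw [hUk]
        exact (ENNReal.mul_le_mul_iff_left hvne hvtop).1 (hfub.trans hgoal)
    calc (∫⁻ z in D ∩ {z : EuclideanSpace ℝ (Fin d) | s ≤ dist x z ∧ dist x z < 2*s}, G z)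
        ≤ ∫⁻ z in ⋃ n, U n, G z := lintegral_mono_set cover
      _ ≤ ∑' n, ∫⁻ z in U n, G z := lintegral_iUnion_le _ _
      _ ≤ ∑' n, ENNReal.ofReal (Kgeo * s ^ A) * (ENNReal.ofReal ((2:ℝ)^(ε-1)))^n :=
          ENNReal.tsum_le_tsum hbound
      _ = ENNReal.ofReal (Kgeo * s ^ A) * (1 - ENNReal.ofReal ((2:ℝ)^(ε-1)))⁻¹ := by
          rw [ENNReal.tsum_mul_left, ENNReal.tsum_geometric]
      _ = ENNReal.ofReal (Kgeo * s ^ A) * ENNReal.ofReal θ := by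
          congr 1
          rw [hθ, ← ENNReal.ofReal_one, ← ENNReal.ofReal_sub _ ha0.le,
            ← ENNReal.ofReal_inv_of_pos (by linarith)]
      _ = ENNReal.ofReal (Kgeo * s ^ A * θ) := by
          rw [← ENNReal.ofReal_mul (by positivity)]
      _ ≤ ENNReal.ofReal (K * max δx s ^ (-ε) * s ^ (d:ℝ)) := by
          apply ENNReal.ofReal_le_ofReal
          have hsA : s ^ A = s ^ ((d:ℝ)) * s ^ (-ε) := by
            rw [hA, sub_eq_add_neg, Real.rpow_add hs0]
          have hmax4 : max δx s ≤ 4*s := max_le (by linarith) (by linarith)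
          have h4s : (4*s:ℝ)^(-ε) ≤ max δx s ^ (-ε) :=
            Real.rpow_le_rpow_of_nonpos hmax0 hmax4 (neg_nonpos.2 hε0.le)
          have hfac : s^(-ε) ≤ 4 * max δx s ^ (-ε) := by
            have h4e : (4:ℝ)^ε ≤ 4 := by
              calc (4:ℝ)^ε ≤ 4^(1:ℝ) :=
                    Real.rpow_le_rpow_of_exponent_le (by norm_num) hε1.le
                _ = 4 := Real.rpow_one 4
            have hsplit : (4*s:ℝ)^(-ε) = 4^(-ε) * s^(-ε) :=
              Real.mul_rpow (by norm_num) hs0.le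
            have h44 : (4:ℝ)^ε * 4^(-ε) = 1 := by
              rw [← Real.rpow_add (by norm_num : (0:ℝ) < 4)]
              simp
            have h4ε0 : (0:ℝ) < 4^ε := Real.rpow_pos_of_pos (by norm_num) ε
            have hbc : (4:ℝ)^(-ε) * s^(-ε) ≤ max δx s ^ (-ε) := hsplit ▸ h4s
            have hint1 := mul_le_mul_of_nonneg_left hbc h4ε0.le
            have hint2 := mul_le_mul_of_nonneg_right h4e hmaxε
            have hc : (4:ℝ)^ε * ((4:ℝ)^(-ε) * s^(-ε)) = s^(-ε) := by
              rw [← mul_assoc, h44, one_mul]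
            linarith [hint1, hint2, hc]
          have hsd0 : (0:ℝ) ≤ s ^ ((d:ℝ)) := Real.rpow_nonneg hs0.le _
          have hKge : 4 * (Kgeo * θ) ≤ K := by
            rw [hK]
            have h1 : (0:ℝ) ≤ 2^(d+1) * Vr := by positivity
            have h2 : (0:ℝ) ≤ Kgeo * θ := le_of_lt (mul_pos hKgeo0 hθ0)
            linarith
          calc Kgeo * s ^ A * θ = (Kgeo * θ) * (s ^ ((d:ℝ)) * s^(-ε)) := by
                rw [hsA]; ring
            _ ≤ (Kgeo * θ) * (s ^ ((d:ℝ)) * (4 * max δx s ^ (-ε))) := by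
                apply mul_le_mul_of_nonneg_left _ (by positivity)
                exact mul_le_mul_of_nonneg_left hfac hsd0
            _ = (4 * (Kgeo * θ)) * (max δx s ^ (-ε) * s ^ ((d:ℝ))) := by ring
            _ ≤ K * (max δx s ^ (-ε) * s ^ ((d:ℝ))) := by
                apply mul_le_mul_of_nonneg_right hKge (by positivity)
            _ = K * max δx s ^ (-ε) * s ^ ((d:ℝ)) := by ring

set_option maxHeartbeats 1600000 in
/-- Lemma 8.4: weighted tail integral near the boundary. -/
theorem statement_15
    (d : ℕ) (hd : 2 ≤ d)
    (D : Set (EuclideanSpace ℝ (Fin d))) (hDopen : IsOpen D)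
    (hDbdd : Bornology.IsBounded D)
    (ε : ℝ) (hε0 : 0 < ε) (hε1 : ε < 1)
    (C₀ : ℝ) (hC₀ : 0 < C₀)
    (hball : ∀ x ∈ D, ∀ ρ : ℝ, 0 < ρ →
      (∫ z in D ∩ Metric.ball x ρ, dd D z ^ (-ε))
        ≤ C₀ * max (dd D x) ρ ^ (-ε) * ρ ^ (d : ℝ)) :
    ∀ p : ℝ, 0 < p → ∃ C : ℝ, 0 < C ∧
      ∀ x ∈ D, ∀ r : ℝ, 0 < r →
        (∫ z in D \ Metric.ball x r, dd D z ^ (-ε) * dist x z ^ (-(d : ℝ) - p))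
          ≤ C * max (dd D x) r ^ (-ε) * r ^ (-p) := by
  intro p hp
  obtain ⟨K, hK0, hshell⟩ := aux_shell d hd D hDopen ε hε0 hε1 C₀ hC₀ hball
  have h2p1 : (2:ℝ)^(-p) < 1 :=
    Real.rpow_lt_one_of_one_lt_of_neg one_lt_two (by linarith)
  have h2p0 : (0:ℝ) < 2^(-p) := Real.rpow_pos_of_pos two_pos _
  set θp : ℝ := (1 - 2^(-p))⁻¹ with hθp
  have hθp0 : 0 < θp := inv_pos.2 (by linarith)
  refine ⟨K * θp, mul_pos hK0 hθp0, ?_⟩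
  intro x hx r hr
  have hmax0 : 0 < max (dd D x) r := lt_of_lt_of_le hr (le_max_right _ _)
  have hRHS0 : 0 ≤ K * θp * max (dd D x) r ^ (-ε) * r ^ (-p) := by
    have := Real.rpow_nonneg hmax0.le (-ε)
    have := Real.rpow_nonneg hr.le (-p)
    positivity
  set f : EuclideanSpace ℝ (Fin d) → ℝ :=
    fun z => dd D z ^ (-ε) * dist x z ^ (-(d:ℝ) - p) with hf
  set g : EuclideanSpace ℝ (Fin d) → ℝ := fun z => dd D z ^ (-ε) with hg
  by_cases hIf : IntegrableOn f (D \ Metric.ball x r)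
  case neg =>
    rw [integral_undef hIf]
    exact hRHS0
  case pos =>
  have hddm : Measurable fun z : EuclideanSpace ℝ (Fin d) => dd D z :=
    (Metric.continuous_infDist_pt (frontier D)).measurable
  have hdistm : Measurable fun z : EuclideanSpace ℝ (Fin d) => dist x z :=
    (Continuous.dist continuous_const continuous_id).measurable
  have hgm : Measurable g := hddm.pow measurable_const
  have hfm : Measurable f := hgm.mul (hdistm.pow measurable_const)
  have hGm : Measurable fun z => ENNReal.ofReal (g z) := hgm.ennreal_ofReal
  have hfnn : ∀ z, 0 ≤ f z := fun z =>
    mul_nonneg (Real.rpow_nonneg Metric.infDist_nonneg _)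
      (Real.rpow_nonneg dist_nonneg _)
  have hgnn : ∀ z, 0 ≤ g z := fun z => Real.rpow_nonneg Metric.infDist_nonneg _
  set A : Set (EuclideanSpace ℝ (Fin d)) := D \ Metric.ball x r with hA
  have hAm : MeasurableSet A := hDopen.measurableSet.diff measurableSet_ball
  have hAeq : A = {z | z ∈ D ∧ r ≤ dist x z} := by
    ext z
    simp only [hA, Set.mem_diff, Metric.mem_ball, Set.mem_setOf_eq, not_lt, dist_comm]
  -- D is bounded: get an upper bound for dist x z on D
  obtain ⟨Rm, hRm0, hRmD⟩ := hDbdd.subset_closedBall_lt 0 x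
  -- g is integrable on the tail
  have hgInt : IntegrableOn g {z | z ∈ D ∧ r ≤ dist x z} := by
    rw [← hAeq]
    have hc0 : (0:ℝ) ≤ Rm ^ ((d:ℝ) + p) := Real.rpow_nonneg hRm0.le _
    apply Integrable.mono (hIf.const_mul (Rm ^ ((d:ℝ)+p)))
      hgm.aestronglyMeasurable
    rw [ae_restrict_iff' hAm]
    apply ae_of_all
    intro z hz
    rw [hAeq] at hz
    obtain ⟨hzD, hzr⟩ := hz
    have hdz0 : 0 < dist x z := lt_of_lt_of_le hr hzr
    have hdzRm : dist x z ≤ Rm := by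
      have := hRmD hzD
      rw [Metric.mem_closedBall] at this
      rwa [dist_comm]
    have hkey : g z = f z * dist x z ^ ((d:ℝ)+p) := by
      rw [hf, hg, mul_assoc, ← Real.rpow_add hdz0]
      norm_num
    have hb : f z * dist x z ^ ((d:ℝ)+p) ≤ f z * Rm ^ ((d:ℝ)+p) :=
      mul_le_mul_of_nonneg_left
        (Real.rpow_le_rpow dist_nonneg hdzRm (by linarith [Nat.cast_nonneg (α := ℝ) d]))
        (hfnn z)
    rw [Real.norm_eq_abs, Real.norm_eq_abs, abs_of_nonneg (hgnn z),
      abs_of_nonneg (mul_nonneg hc0 (hfnn z))]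
    rw [hkey]
    linarith
  -- shells
  set Sh : ℕ → Set (EuclideanSpace ℝ (Fin d)) := fun n =>
    D ∩ {z | r*2^n ≤ dist x z ∧ dist x z < 2*(r*2^n)} with hSh
  have cover : A ⊆ ⋃ n, Sh n := by
    intro z hz
    rw [hAeq] at hz
    obtain ⟨hzD, hzr⟩ := hz
    have hdz0 : 0 < dist x z := lt_of_lt_of_le hr hzr
    have ht1 : 1 ≤ dist x z / r := (le_div_iff₀ hr).2 (by linarith)
    obtain ⟨n, hn1, hn2⟩ := aux_dyadic ht1
    refine Set.mem_iUnion.2 ⟨n, hzD, ?_, ?_⟩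
    · have h := (le_div_iff₀ hr).1 hn1
      linarith
    · have : dist x z / r < 2^(n+1) := hn2
      rw [div_lt_iff₀ hr] at this
      calc dist x z < 2^(n+1) * r := this
        _ = 2*(r*2^n) := by ring
  have hqn0 : 0 ≤ (2:ℝ)^(-p) := h2p0.le
  have hcK : (0:ℝ) ≤ K * max (dd D x) r ^ (-ε) * r ^ (-p) := by
    have := Real.rpow_nonneg hmax0.le (-ε)
    have := Real.rpow_nonneg hr.le (-p)
    positivity
  have hshell_n : ∀ n : ℕ, (∫⁻ z in Sh n, ENNReal.ofReal (f z)) ≤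
      ENNReal.ofReal (K * max (dd D x) r ^ (-ε) * r ^ (-p)) *
        (ENNReal.ofReal ((2:ℝ)^(-p)))^n := by
    intro n
    set sn : ℝ := r * 2^n with hsn
    have hsn0 : 0 < sn := by
      rw [hsn]; positivity
    have hrsn : r ≤ sn := by
      rw [hsn]
      calc r = r * 1 := (mul_one r).symm
        _ ≤ r * 2^n := by
            apply mul_le_mul_of_nonneg_left _ hr.le
            exact one_le_pow₀ one_le_two
    have hcd : (0:ℝ) ≤ sn ^ (-(d:ℝ)-p) := Real.rpow_nonneg hsn0.le _
    have step1 : (∫⁻ z in Sh n, ENNReal.ofReal (f z)) ≤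
        ENNReal.ofReal (sn ^ (-(d:ℝ)-p)) * ∫⁻ z in Sh n, ENNReal.ofReal (g z) := by
      rw [← lintegral_const_mul' _ _ ENNReal.ofReal_ne_top]
      apply setLIntegral_mono (measurable_const.mul hGm)
      rintro z ⟨hzD, hz1, hz2⟩
      show ENNReal.ofReal (f z) ≤ ENNReal.ofReal (sn ^ (-(d:ℝ)-p)) * ENNReal.ofReal (g z)
      rw [← ENNReal.ofReal_mul hcd]
      apply ENNReal.ofReal_le_ofReal
      rw [hf]
      have hdd : dist x z ^ (-(d:ℝ)-p) ≤ sn ^ (-(d:ℝ)-p) := by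
        apply Real.rpow_le_rpow_of_nonpos hsn0 hz1
        have : (0:ℝ) ≤ (d:ℝ) := Nat.cast_nonneg d
        linarith
      calc dd D z ^ (-ε) * dist x z ^ (-(d:ℝ)-p)
          ≤ dd D z ^ (-ε) * sn ^ (-(d:ℝ)-p) :=
            mul_le_mul_of_nonneg_left hdd (hgnn z)
        _ = sn ^ (-(d:ℝ)-p) * g z := by rw [hg]; ring
    have step2 : (∫⁻ z in Sh n, ENNReal.ofReal (g z)) ≤
        ENNReal.ofReal (K * max (dd D x) sn ^ (-ε) * sn ^ (d:ℝ)) := by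
      have := hshell x hx r hr hgInt sn hrsn
      have hSheq : Sh n = D ∩ {z | sn ≤ dist x z ∧ dist x z < 2*sn} := rfl
      rw [hSheq]
      exact this
    have step3 : sn ^ (-(d:ℝ)-p) * (K * max (dd D x) sn ^ (-ε) * sn ^ (d:ℝ)) ≤
        (K * max (dd D x) r ^ (-ε) * r ^ (-p)) * ((2:ℝ)^(-p))^n := by
      have e1 : sn ^ (-(d:ℝ)-p) * sn ^ ((d:ℝ)) = sn ^ (-p) := by
        rw [← Real.rpow_add hsn0]; congr 1; ring
      have e2 : max (dd D x) sn ^ (-ε) ≤ max (dd D x) r ^ (-ε) := by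
        apply Real.rpow_le_rpow_of_nonpos hmax0
          (max_le_max le_rfl hrsn) (neg_nonpos.2 hε0.le)
      have e3 : sn ^ (-p) = r ^ (-p) * ((2:ℝ)^(-p))^n := by
        rw [hsn, Real.mul_rpow hr.le (by positivity)]
        congr 1
        rw [← Real.rpow_natCast (2:ℝ) n, ← Real.rpow_natCast ((2:ℝ)^(-p)) n,
          ← Real.rpow_mul two_pos.le, ← Real.rpow_mul two_pos.le]
        congr 1; ring
      have hKm : (0:ℝ) ≤ K * max (dd D x) r ^ (-ε) :=
        mul_nonneg hK0.le (Real.rpow_nonneg hmax0.le _)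
      have hsnp : (0:ℝ) ≤ sn ^ (-p) := Real.rpow_nonneg hsn0.le _
      calc sn ^ (-(d:ℝ)-p) * (K * max (dd D x) sn ^ (-ε) * sn ^ ((d:ℝ)))
          = (K * max (dd D x) sn ^ (-ε)) * (sn ^ (-(d:ℝ)-p) * sn ^ ((d:ℝ))) := by ring
        _ = (K * max (dd D x) sn ^ (-ε)) * sn ^ (-p) := by rw [e1]
        _ ≤ (K * max (dd D x) r ^ (-ε)) * sn ^ (-p) := by
            apply mul_le_mul_of_nonneg_right _ hsnp
            exact mul_le_mul_of_nonneg_left e2 hK0.le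
        _ = (K * max (dd D x) r ^ (-ε) * r ^ (-p)) * ((2:ℝ)^(-p))^n := by
            rw [e3]; ring
    calc (∫⁻ z in Sh n, ENNReal.ofReal (f z))
        ≤ ENNReal.ofReal (sn ^ (-(d:ℝ)-p)) *
            ENNReal.ofReal (K * max (dd D x) sn ^ (-ε) * sn ^ (d:ℝ)) := by
          exact le_trans step1 (mul_le_mul_right step2 _)
      _ = ENNReal.ofReal (sn ^ (-(d:ℝ)-p) * (K * max (dd D x) sn ^ (-ε) * sn ^ (d:ℝ))) := by
          rw [← ENNReal.ofReal_mul hcd]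
      _ ≤ ENNReal.ofReal ((K * max (dd D x) r ^ (-ε) * r ^ (-p)) * ((2:ℝ)^(-p))^n) :=
          ENNReal.ofReal_le_ofReal step3
      _ = ENNReal.ofReal (K * max (dd D x) r ^ (-ε) * r ^ (-p)) *
            (ENNReal.ofReal ((2:ℝ)^(-p)))^n := by
          rw [ENNReal.ofReal_mul hcK, ENNReal.ofReal_pow hqn0]
  have main : (∫⁻ z in A, ENNReal.ofReal (f z)) ≤
      ENNReal.ofReal (K * θp * max (dd D x) r ^ (-ε) * r ^ (-p)) := by
    calc (∫⁻ z in A, ENNReal.ofReal (f z))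
        ≤ ∫⁻ z in ⋃ n, Sh n, ENNReal.ofReal (f z) := lintegral_mono_set cover
      _ ≤ ∑' n, ∫⁻ z in Sh n, ENNReal.ofReal (f z) := lintegral_iUnion_le _ _
      _ ≤ ∑' n, ENNReal.ofReal (K * max (dd D x) r ^ (-ε) * r ^ (-p)) *
            (ENNReal.ofReal ((2:ℝ)^(-p)))^n := ENNReal.tsum_le_tsum hshell_n
      _ = ENNReal.ofReal (K * max (dd D x) r ^ (-ε) * r ^ (-p)) *
            (1 - ENNReal.ofReal ((2:ℝ)^(-p)))⁻¹ := by
          rw [ENNReal.tsum_mul_left, ENNReal.tsum_geometric]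
      _ = ENNReal.ofReal (K * max (dd D x) r ^ (-ε) * r ^ (-p)) * ENNReal.ofReal θp := by
          congr 1
          rw [hθp, ← ENNReal.ofReal_one, ← ENNReal.ofReal_sub _ hqn0,
            ← ENNReal.ofReal_inv_of_pos (by linarith)]
      _ = ENNReal.ofReal (K * θp * max (dd D x) r ^ (-ε) * r ^ (-p)) := by
          rw [← ENNReal.ofReal_mul hcK]
          congr 1; ring
  have keyeq : (∫ z in A, f z) = (∫⁻ z in A, ENNReal.ofReal (f z)).toReal :=
    integral_eq_lintegral_of_nonneg_ae (ae_of_all _ hfnn) hfm.aestronglyMeasurable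
  rw [keyeq]
  calc (∫⁻ z in A, ENNReal.ofReal (f z)).toReal
      ≤ (ENNReal.ofReal (K * θp * max (dd D x) r ^ (-ε) * r ^ (-p))).toReal :=
        ENNReal.toReal_mono ENNReal.ofReal_ne_top main
    _ = K * θp * max (dd D x) r ^ (-ε) * r ^ (-p) := ENNReal.toReal_ofReal hRHS0
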